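/- For all reals a₋, a₊ ≥ 0 with (a₋ + a₊)/2 ≤ 1 and every p > 0, the function Φ_p satisfies (Φ_p(a₋) + Φ_p(a₊))/2 ≤ Φ_p((a₋ + a₊)/2). -/

import Mathlib

open Real Set

noncomputable def phi (p x : ℝ) : ℝ := (1 + x) ^ (-p / 2)

noncomputable def Phi (p x : ℝ) : ℝ :=
  if 1 ≤ x then phi p x else 2 * phi p 1 - phi p (2 - x)

lemma phi_hasDerivAt (p : ℝ) {x : ℝ} (hx : -1 < x) :
    HasDerivAt (phi p) ((-p / 2) * (1 + x) ^ (-p / 2 - 1)) x := by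
  have h1 : HasDerivAt (fun y : ℝ => 1 + y) 1 x := by
    simpa using (hasDerivAt_id x).const_add 1
  have := h1.rpow_const (p := -p / 2) (Or.inl (by linarith))
  exact (by simpa [mul_comm] using this : HasDerivAt (fun y : ℝ => (1 + y) ^ (-p / 2)) ((-p / 2) * (1 + x) ^ (-p / 2 - 1)) x)

lemma phi_deriv_hasDerivAt (p : ℝ) {x : ℝ} (hx : -1 < x) :
    HasDerivAt (fun y => (-p / 2) * (1 + y) ^ (-p / 2 - 1))
      ((-p / 2) * ((-p / 2 - 1) * (1 + x) ^ (-p / 2 - 1 - 1))) x := by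
  have h1 : HasDerivAt (fun y : ℝ => 1 + y) 1 x := by
    simpa using (hasDerivAt_id x).const_add 1
  have := (h1.rpow_const (p := -p / 2 - 1) (Or.inl (by linarith))).const_mul (-p / 2)
  simpa [mul_comm, mul_assoc, mul_left_comm] using this

lemma phi_convexOn (p : ℝ) (hp : 0 < p) : ConvexOn ℝ (Ici (0 : ℝ)) (phi p) := by
  have key : ConvexOn ℝ (Ici (-1/2 : ℝ)) (phi p) := by
    apply convexOn_of_deriv2_nonneg (convex_Ici _)
    · intro x hx
      exact (phi_hasDerivAt p (by simp at hx; linarith)).continuousAt.continuousWithinAt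
    · intro x hx
      rw [interior_Ici] at hx
      exact ((phi_hasDerivAt p (by simp at hx; linarith)).differentiableAt).differentiableWithinAt
    · intro x hx
      rw [interior_Ici] at hx
      have hev : (Set.EqOn (deriv (phi p))
          (fun y => (-p / 2) * (1 + y) ^ (-p / 2 - 1)) (Ioi (-1/2 : ℝ))) := by
        intro y hy
        exact (phi_hasDerivAt p (by simp at hy ⊢; linarith)).deriv
      have : deriv (phi p) =ᶠ[nhds x] (fun y => (-p / 2) * (1 + y) ^ (-p / 2 - 1)) :=
        Filter.eventuallyEq_of_mem (Ioi_mem_nhds hx) hev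
      exact (this.differentiableAt_iff.mpr
        (phi_deriv_hasDerivAt p (by simp at hx; linarith)).differentiableAt).differentiableWithinAt
    · intro x hx
      rw [interior_Ici] at hx
      have hx' : (-1 : ℝ) < x := by simp at hx; linarith
      have hev : deriv (phi p) =ᶠ[nhds x] (fun y => (-p / 2) * (1 + y) ^ (-p / 2 - 1)) :=
        Filter.eventuallyEq_of_mem (Ioi_mem_nhds hx)
          (fun y hy => (phi_hasDerivAt p (by simp at hy ⊢; linarith)).deriv)
      have h2 : deriv^[2] (phi p) x
          = (-p / 2) * ((-p / 2 - 1) * (1 + x) ^ (-p / 2 - 1 - 1)) := by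
        rw [Function.iterate_succ, Function.iterate_one, Function.comp_apply]
        rw [hev.deriv_eq]
        exact (phi_deriv_hasDerivAt p hx').deriv
      rw [h2]
      have h3 : (0 : ℝ) < (1 + x) ^ (-p / 2 - 1 - 1) := rpow_pos_of_pos (by linarith) _
      have h4 : (0 : ℝ) ≤ (-p / 2) * (-p / 2 - 1) := by nlinarith
      nlinarith
  exact key.subset (fun x hx => by simp at hx ⊢; linarith) (convex_Ici _)

lemma phi_midpoint (p : ℝ) (hp : 0 < p) {x y : ℝ} (hx : 0 ≤ x) (hy : 0 ≤ y) :
    phi p ((x + y) / 2) ≤ (phi p x + phi p y) / 2 := by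
  have := (phi_convexOn p hp).2 (mem_Ici.mpr hx) (mem_Ici.mpr hy)
    (le_of_lt one_half_pos) (le_of_lt one_half_pos) (by norm_num)
  simp only [smul_eq_mul] at this
  have e1 : (1/2 : ℝ) * x + (1/2 : ℝ) * y = (x + y) / 2 := by ring
  rw [e1] at this
  linarith

lemma phi_increment (p : ℝ) (hp : 0 < p) {v t : ℝ} (hv : 1 ≤ v) (ht : 0 ≤ t) :
    phi p v + phi p (1 + t) ≤ phi p 1 + phi p (v + t) := by
  rcases eq_or_lt_of_le ht with rfl | ht'
  · simp only [add_zero]; linarith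
  rcases eq_or_lt_of_le hv with rfl | hv'
  · rw [add_comm 1 t, add_comm t 1]
  have hs : (0 : ℝ) < v + t - 1 := by linarith
  set lam : ℝ := t / (v + t - 1) with hlam
  have hlam0 : 0 ≤ lam := div_nonneg ht hs.le
  have hlam1 : lam ≤ 1 := by
    rw [div_le_one hs]; linarith
  have hone : (0:ℝ) ≤ 1 - lam := by linarith
  have hconv := phi_convexOn p hp
  have h1 : phi p v ≤ lam * phi p 1 + (1 - lam) * phi p (v + t) := by
    have := hconv.2 (mem_Ici.mpr (by linarith : (0:ℝ) ≤ 1))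
      (mem_Ici.mpr (by linarith : (0:ℝ) ≤ v + t)) hlam0 hone (by ring)
    simp only [smul_eq_mul] at this
    have e : lam * 1 + (1 - lam) * (v + t) = v := by
      have key : lam * (v + t - 1) = t := by rw [hlam]; field_simp
      linear_combination -key
    rw [e] at this; exact this
  have h2 : phi p (1 + t) ≤ (1 - lam) * phi p 1 + lam * phi p (v + t) := by
    have := hconv.2 (mem_Ici.mpr (by linarith : (0:ℝ) ≤ 1))
      (mem_Ici.mpr (by linarith : (0:ℝ) ≤ v + t)) hone hlam0 (by ring)
    simp only [smul_eq_mul] at this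
    have e : (1 - lam) * 1 + lam * (v + t) = 1 + t := by
      have key : lam * (v + t - 1) = t := by rw [hlam]; field_simp
      linear_combination key
    rw [e] at this; exact this
  linarith

lemma Phi_of_le (p : ℝ) {x : ℝ} (hx : x ≤ 1) :
    Phi p x = 2 * phi p 1 - phi p (2 - x) := by
  rcases eq_or_lt_of_le hx with rfl | hx'
  · simp [Phi]; ring
  · rw [Phi, if_neg (by linarith)]

lemma stmt6_case2 (p : ℝ) (hp : 0 < p) (a b : ℝ) (ha : 0 ≤ a) (hb : 1 < b)
    (h : (a + b) / 2 ≤ 1) :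
    (Phi p a + Phi p b) / 2 ≤ Phi p ((a + b) / 2) := by
  have hm : (a + b) / 2 ≤ 1 := h
  have ha1 : a ≤ 1 := by linarith
  rw [Phi_of_le p ha1, Phi_of_le p hm, Phi, if_pos hb.le]
  set u : ℝ := 2 - a with hu
  set v : ℝ := b with hv
  set t : ℝ := u - v with htt
  have ht : 0 ≤ t := by simp [htt, hu, hv]; linarith
  have hv1 : 1 ≤ v := hb.le
  have hinc := phi_increment p hp hv1 ht
  have hvt : v + t = u := by ring
  rw [hvt] at hinc
  have hmid := phi_midpoint p hp (by norm_num : (0:ℝ) ≤ 1) (by linarith : (0:ℝ) ≤ 1 + t)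
  have e : (1 + (1 + t)) / 2 = 2 - (a + b) / 2 := by simp [htt, hu, hv]; ring
  rw [e] at hmid
  linarith

theorem stmt6 (p : ℝ) (hp : 0 < p) (aneg apos : ℝ) (hneg : 0 ≤ aneg) (hpos : 0 ≤ apos)
    (h : (aneg + apos) / 2 ≤ 1) :
    (Phi p aneg + Phi p apos) / 2 ≤ Phi p ((aneg + apos) / 2) := by
  rcases le_or_gt aneg 1 with hn1 | hn1
  · rcases le_or_gt apos 1 with hp1 | hp1
    · -- both ≤ 1
      rw [Phi_of_le p hn1, Phi_of_le p hp1, Phi_of_le p h]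
      have hmid := phi_midpoint p hp (by linarith : (0:ℝ) ≤ 2 - aneg)
        (by linarith : (0:ℝ) ≤ 2 - apos)
      have e : ((2 - aneg) + (2 - apos)) / 2 = 2 - (aneg + apos) / 2 := by ring
      rw [e] at hmid
      linarith
    · exact stmt6_case2 p hp aneg apos hneg hp1 h
  · rcases le_or_gt apos 1 with hp1 | hp1
    · have := stmt6_case2 p hp apos aneg hpos hn1 (by linarith)
      rw [add_comm apos aneg] at this
      linarith
    · linarith
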